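/- For a principal Borel ideal B = Borel(m) and an index p with x_p dividing m, the monomial m/x_p is a p-socle: the set of monomials w with (m/x_p)·w ∈ B is exactly the monomial ideal generated by x_1,…,x_p. In particular, (m/x_p)·x_{p+1}^N ∉ Borel(m) for every N ≥ 0, while (m/x_p)·x_q ∈ Borel(m) for every q ≤ p. -/

import Mathlib

/-- Borel order: `m1` precedes `m2`. -/
def BorelLe (m1 m2 : Multiset ℕ) : Prop :=
  Multiset.card m2 ≤ Multiset.card m1 ∧
    ∀ j < Multiset.card m2,
      (m1.sort (· ≤ ·)).getD j 0 ≤ (m2.sort (· ≤ ·)).getD j 0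

/-- `x` is in the principal Borel ideal `Borel(m)`. -/
def BorelMem (m x : Multiset ℕ) : Prop := ∃ v, BorelLe v m ∧ v ≤ x

/-- In a sorted list, if the `j`-th entry is `≤ p` then more than `j` entries are `≤ p`. -/
lemma sorted_lt_countP {l : List ℕ} (hl : l.Pairwise (· ≤ ·)) {j p : ℕ}
    (hj : j < l.length) (h : l.getD j 0 ≤ p) :
    j < l.countP (fun x => x ≤ p) := by
  induction l generalizing j with
  | nil => simp at hj
  | cons a t ih =>
    rw [List.pairwise_cons] at hl
    rw [List.countP_cons]
    cases j with
    | zero =>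
      simp only [List.getD_cons_zero] at h
      simp [h]
    | succ j =>
      simp only [List.getD_cons_succ] at h
      have hj' : j < t.length := by simpa using hj
      have hmem : t.getD j 0 ∈ t := by
        rw [List.getD_eq_getElem _ _ hj']
        exact List.getElem_mem hj'
      have ha : a ≤ p := le_trans (hl.1 _ hmem) h
      have := ih hl.2 hj' h
      simp [ha]
      omega

/-- In a sorted list, if more than `j` entries are `≤ p` then the `j`-th entry is `≤ p`. -/
lemma countP_lt_sorted {l : List ℕ} (hl : l.Pairwise (· ≤ ·)) {j p : ℕ}
    (hj : j < l.length) (h : j < l.countP (fun x => x ≤ p)) :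
    l.getD j 0 ≤ p := by
  induction l generalizing j with
  | nil => simp at hj
  | cons a t ih =>
    rw [List.pairwise_cons] at hl
    rw [List.countP_cons] at h
    cases j with
    | zero =>
      simp only [List.getD_cons_zero]
      by_contra hap
      have ht : t.countP (fun x => x ≤ p) = 0 := by
        rw [List.countP_eq_zero]
        intro x hx
        have := hl.1 x hx
        simp only [decide_eq_true_eq]
        omega
      rw [ht] at h
      simp [hap] at h
    | succ j =>
      simp only [List.getD_cons_succ]
      have hj' : j < t.length := by simpa using hj
      apply ih hl.2 hj'
      by_cases ha : a ≤ p <;> simp [ha] at h <;> omega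

lemma countP_sort (s : Multiset ℕ) (p : ℕ) :
    (s.sort (· ≤ ·)).countP (fun x => decide (x ≤ p)) = Multiset.countP (fun x => x ≤ p) s := by
  conv_rhs => rw [← Multiset.sort_eq s (· ≤ ·)]
  exact Multiset.coe_countP _ _

lemma sorted_lt_countP' (s : Multiset ℕ) {j p : ℕ}
    (hj : j < Multiset.card s) (h : (s.sort (· ≤ ·)).getD j 0 ≤ p) :
    j < Multiset.countP (fun x => x ≤ p) s := by
  have hlen : (s.sort (· ≤ ·)).length = Multiset.card s := Multiset.length_sort _
  have := sorted_lt_countP (Multiset.pairwise_sort s _) (by omega : j < (s.sort (· ≤ ·)).length) h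
  rwa [countP_sort] at this

lemma countP_lt_sorted' (s : Multiset ℕ) {j p : ℕ}
    (hj : j < Multiset.card s) (h : j < Multiset.countP (fun x => x ≤ p) s) :
    (s.sort (· ≤ ·)).getD j 0 ≤ p := by
  have hlen : (s.sort (· ≤ ·)).length = Multiset.card s := Multiset.length_sort _
  apply countP_lt_sorted (Multiset.pairwise_sort s _) (by omega : j < (s.sort (· ≤ ·)).length)
  rwa [countP_sort]

/-- For a principal Borel ideal `B = Borel(m)` and `x_p ∣ m`, the monomial
`m/x_p` is a `p`-socle: the monomials `w` with `(m/x_p)·w ∈ B` are exactly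
those in the ideal `(x_1,…,x_p)`.  In particular `(m/x_p)·x_{p+1}^N ∉ B` for
all `N ≥ 0` while `(m/x_p)·x_q ∈ B` for all `1 ≤ q ≤ p`. -/
theorem principal_borel_p_socle (m : Multiset ℕ) (p : ℕ)
    (hm : ∀ x ∈ m, 1 ≤ x) (hp : p ∈ m) :
    (∀ w : Multiset ℕ, (∀ x ∈ w, 1 ≤ x) →
      (BorelMem m (m.erase p + w) ↔ ∃ q ∈ w, q ≤ p)) ∧
    (∀ N : ℕ, ¬ BorelMem m (m.erase p + Multiset.replicate N (p + 1))) ∧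
    (∀ q : ℕ, 1 ≤ q → q ≤ p → BorelMem m (q ::ₘ m.erase p)) := by
  set s := m.erase p with hs
  have hcons : p ::ₘ s = m := Multiset.cons_erase hp
  have main : ∀ w : Multiset ℕ,
      (BorelMem m (s + w) ↔ ∃ q ∈ w, q ≤ p) := by
    intro w
    constructor
    · rintro ⟨v, ⟨hcard, hsort⟩, hsub⟩
      by_contra hq
      push_neg at hq
      set k := Multiset.countP (fun x => x ≤ p) m with hk
      have hk1 : 0 < k := Multiset.countP_pos.mpr ⟨p, hp, le_refl p⟩
      have hkcard : k ≤ Multiset.card m := Multiset.countP_le_card _ m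
      have hmj : (m.sort (· ≤ ·)).getD (k - 1) 0 ≤ p :=
        countP_lt_sorted' m (by omega) (by omega)
      have hvj : (v.sort (· ≤ ·)).getD (k - 1) 0 ≤ p :=
        le_trans (hsort (k - 1) (by omega)) hmj
      have hcountv : k ≤ Multiset.countP (fun x => x ≤ p) v := by
        have := sorted_lt_countP' v (by omega) hvj
        omega
      have hcounts : Multiset.countP (fun x => x ≤ p) s + 1 = k := by
        rw [hk, ← hcons, Multiset.countP_cons]
        simp
      have hcountw : Multiset.countP (fun x => x ≤ p) w = 0 := by
        rw [Multiset.countP_eq_zero]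
        intro q hqw
        have := hq q hqw
        omega
      have hle : Multiset.countP (fun x => x ≤ p) v ≤
          Multiset.countP (fun x => x ≤ p) (s + w) := Multiset.countP_le_of_le _ hsub
      rw [Multiset.countP_add, hcountw] at hle
      omega
    · rintro ⟨q, hqw, hqp⟩
      refine ⟨q ::ₘ s, ⟨?_, ?_⟩, ?_⟩
      · rw [← hcons]; simp
      · intro j hj
        set p' := (m.sort (· ≤ ·)).getD j 0 with hp'
        have h1 : j < Multiset.countP (fun x => x ≤ p') m :=
          sorted_lt_countP' m hj (le_refl _)
        have h2 : Multiset.countP (fun x => x ≤ p') m ≤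
            Multiset.countP (fun x => x ≤ p') (q ::ₘ s) := by
          rw [← hcons, Multiset.countP_cons, Multiset.countP_cons]
          split_ifs <;> omega
        have hcv : Multiset.card (q ::ₘ s) = Multiset.card m := by
          rw [← hcons]; simp
        exact countP_lt_sorted' (q ::ₘ s) (by omega) (by omega)
      · have h1 : ({q} : Multiset ℕ) ≤ w := Multiset.singleton_le.mpr hqw
        calc q ::ₘ s = s + {q} := by rw [add_comm, Multiset.singleton_add]
          _ ≤ s + w := add_le_add_right h1 s
  refine ⟨fun w _ => main w, ?_, ?_⟩
  · intro N h
    rcases (main _).mp h with ⟨q, hqw, hqp⟩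
    have := Multiset.eq_of_mem_replicate hqw
    omega
  · intro q h1 hqp
    have := (main {q}).mpr ⟨q, Multiset.mem_singleton_self q, hqp⟩
    rwa [add_comm, Multiset.singleton_add] at this
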